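/- If a graph G on n vertices contains no 4-cycle (no C4 subgraph), then the number of edges of G is at most (n/4)(1 + √(4n − 3)). -/

import Mathlib

/-- `G` contains a 4-cycle: four distinct vertices joined cyclically. -/
def HasC4 {V : Type*} (G : SimpleGraph V) : Prop :=
  ∃ a b c d : V, a ≠ b ∧ a ≠ c ∧ a ≠ d ∧ b ≠ c ∧ b ≠ d ∧ c ≠ d ∧
    G.Adj a b ∧ G.Adj b c ∧ G.Adj c d ∧ G.Adj d a

/-- Kővári–Sós–Turán / Reiman bound: a C₄-free graph on `n` vertices has at most
`(n/4)(1 + √(4n − 3))` edges. -/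
theorem stmt3 {V : Type*} [Fintype V] (G : SimpleGraph V) [DecidableRel G.Adj]
    (h : ¬ HasC4 G) :
    (G.edgeFinset.card : ℝ) ≤
      (Fintype.card V : ℝ) / 4 * (1 + Real.sqrt (4 * (Fintype.card V : ℝ) - 3)) := by
  classical
  rcases Nat.eq_zero_or_pos (Fintype.card V) with h0 | h1
  · haveI : IsEmpty V := Fintype.card_eq_zero_iff.mp h0
    have he : G.edgeFinset = ∅ := Finset.eq_empty_of_isEmpty _
    rw [he, h0]
    simp
  · set n := Fintype.card V with hn
    set T : Finset (V × V × V) :=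
      Finset.univ.filter (fun t => G.Adj t.1 t.2.1 ∧ G.Adj t.1 t.2.2 ∧ t.2.1 ≠ t.2.2) with hT
    -- T counts cherries; fiberwise over the center vertex
    have hTcard : T.card = ∑ v : V, (G.degree v * G.degree v - G.degree v) := by
      rw [Finset.card_eq_sum_card_fiberwise (f := fun t => t.1) (t := Finset.univ)
        (fun x _ => Finset.mem_univ _)]
      refine Finset.sum_congr rfl (fun v _ => ?_)
      rw [← SimpleGraph.card_neighborFinset_eq_degree, ← Finset.offDiag_card]
      refine Finset.card_bij' (fun t _ => t.2) (fun p _ => (v, p)) ?_ ?_ ?_ ?_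
      · intro t ht
        simp only [hT, Finset.mem_filter, Finset.mem_univ, true_and] at ht
        obtain ⟨⟨h1, h2, h3⟩, h4⟩ := ht
        subst h4
        exact Finset.mem_offDiag.mpr ⟨by simpa using h1, by simpa using h2, h3⟩
      · intro p hp
        rw [Finset.mem_offDiag] at hp
        simp only [hT, Finset.mem_filter, Finset.mem_univ, true_and]
        exact ⟨⟨by simpa using hp.1, by simpa using hp.2.1, hp.2.2⟩, trivial⟩
      · intro t ht
        simp only [hT, Finset.mem_filter] at ht
        exact Prod.ext ht.2.symm rfl
      · intro p _
        rfl
    -- injectivity of t ↦ t.2 on T, from C4-freeness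
    have hTle : T.card ≤ (Finset.univ : Finset V).offDiag.card := by
      apply Finset.card_le_card_of_injOn (fun t => t.2)
      · intro t ht
        simp only [Finset.mem_coe, hT, Finset.mem_filter, Finset.mem_univ, true_and] at ht
        exact Finset.mem_offDiag.mpr ⟨Finset.mem_univ _, Finset.mem_univ _, ht.2.2⟩
      · intro t ht t' ht' h2
        simp only [Finset.mem_coe, hT, Finset.mem_filter, Finset.mem_univ, true_and] at ht ht'
        by_contra hne
        have hv : t.1 ≠ t'.1 := fun hv => hne (Prod.ext hv h2)
        obtain ⟨ha1, ha2, hne12⟩ := ht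
        obtain ⟨hb1, hb2, _⟩ := ht'
        have h2' : t.2 = t'.2 := h2
        rw [← h2'] at hb1 hb2
        exact h ⟨t.2.1, t.1, t.2.2, t'.1,
          (G.ne_of_adj ha1).symm, hne12, (G.ne_of_adj hb1).symm,
          G.ne_of_adj ha2, hv, (G.ne_of_adj hb2).symm,
          ha1.symm, ha2, hb2.symm, hb1⟩
    have hoff : (Finset.univ : Finset V).offDiag.card = n * n - n := by
      rw [Finset.offDiag_card, Finset.card_univ]
    -- key ℕ inequality
    have key : ∑ v : V, G.degree v * G.degree v ≤ n * n - n + ∑ v : V, G.degree v := by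
      have h2 : ∀ m : ℕ, m ≤ m * m := by
        intro m
        rcases Nat.eq_zero_or_pos m with hm | hm
        · simp [hm]
        · exact Nat.le_mul_of_pos_left m hm
      calc ∑ v : V, G.degree v * G.degree v
          = ∑ v : V, ((G.degree v * G.degree v - G.degree v) + G.degree v) := by
            refine Finset.sum_congr rfl fun v _ => ?_
            rw [Nat.sub_add_cancel (h2 _)]
        _ = (∑ v : V, (G.degree v * G.degree v - G.degree v)) + ∑ v : V, G.degree v :=
            Finset.sum_add_distrib
        _ ≤ n * n - n + ∑ v : V, G.degree v := by
            have := hTcard ▸ hoff ▸ hTle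
            omega
    -- move to ℝ
    set e : ℝ := (G.edgeFinset.card : ℝ) with he
    have hdeg : ∑ v : V, (G.degree v : ℝ) = 2 * e := by
      rw [he, ← Nat.cast_ofNat, ← Nat.cast_mul, ← G.sum_degrees_eq_twice_card_edges]
      push_cast
      rfl
    have hCS : (2 * e) ^ 2 ≤ (n : ℝ) * ∑ v : V, (G.degree v : ℝ) ^ 2 := by
      rw [← hdeg]
      simpa [Finset.card_univ] using
        (sq_sum_le_card_mul_sum_sq (s := (Finset.univ : Finset V))
          (f := fun v => (G.degree v : ℝ)))
    have hkeyR : ∑ v : V, (G.degree v : ℝ) ^ 2 ≤ (n : ℝ) * n - n + 2 * e := by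
      have hc : ((∑ v : V, G.degree v * G.degree v : ℕ) : ℝ)
          ≤ ((n * n - n + ∑ v : V, G.degree v : ℕ) : ℝ) := Nat.cast_le.mpr key
      push_cast [Nat.cast_sub (Nat.le_mul_of_pos_left n h1)] at hc
      calc ∑ v : V, (G.degree v : ℝ) ^ 2 = ∑ v : V, (G.degree v : ℝ) * G.degree v := by
            refine Finset.sum_congr rfl fun v _ => sq (G.degree v : ℝ) ▸ by ring
        _ ≤ (n : ℝ) * n - n + ∑ v : V, (G.degree v : ℝ) := hc
        _ = (n : ℝ) * n - n + 2 * e := by rw [hdeg]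
    have hnR : (1 : ℝ) ≤ n := by exact_mod_cast h1
    have hq : (4 * e - n) ^ 2 ≤ (n : ℝ) ^ 2 * (4 * n - 3) := by nlinarith
    have hsq : 4 * e - n ≤ (n : ℝ) * Real.sqrt (4 * n - 3) := by
      calc 4 * e - (n : ℝ) ≤ |4 * e - n| := le_abs_self _
        _ = Real.sqrt ((4 * e - n) ^ 2) := (Real.sqrt_sq_eq_abs _).symm
        _ ≤ Real.sqrt ((n : ℝ) ^ 2 * (4 * n - 3)) := Real.sqrt_le_sqrt hq
        _ = (n : ℝ) * Real.sqrt (4 * n - 3) := by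
            rw [Real.sqrt_mul (sq_nonneg _), Real.sqrt_sq (by positivity)]
    have : (n : ℝ) / 4 * (1 + Real.sqrt (4 * n - 3))
        = ((n : ℝ) + n * Real.sqrt (4 * n - 3)) / 4 := by ring
    rw [hn] at this ⊢
    rw [this]
    linarith
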